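/- For every bounded, co-bounded (m,n)-invariant set Δ there exists a unique monotone word p = p_{n-1} ⋯ p_1 p_0 ∈ [m]^n with p_0 ≤ p_1 ≤ ... ≤ p_{n-1} such that p · Δ = Δ + n under the generator-removal action. -/

import Mathlib

/-- The shift of a set of integers: `Δ + k`. -/
def shiftSet (Δ : Set ℤ) (k : ℤ) : Set ℤ := (· + k) '' Δ

/-- `Δ` is `k`-invariant if `Δ + k ⊆ Δ`. -/
def Invariant (k : ℤ) (Δ : Set ℤ) : Prop := shiftSet Δ k ⊆ Δ

/-- `Δ` is bounded (has a minimum element). -/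
def HasMin (Δ : Set ℤ) : Prop := ∃ a ∈ Δ, ∀ x ∈ Δ, a ≤ x

/-- `Δ` is co-bounded: contains all sufficiently large integers. -/
def CoBounded (Δ : Set ℤ) : Prop := ∃ N : ℤ, ∀ x : ℤ, N ≤ x → x ∈ Δ

/-- The `k`-generators of `Δ`: elements `a ∈ Δ` with `a - k ∉ Δ`, i.e. `Δ \ (Δ + k)`. -/
def gens (k : ℤ) (Δ : Set ℤ) : Set ℤ := Δ \ shiftSet Δ k

/-- The `(j+1)`-st smallest element of a set of integers. -/
noncomputable def nthSmallest : ℕ → Set ℤ → ℤ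
  | 0, S => sInf S
  | j+1, S => nthSmallest j (S \ {sInf S})

/-- The letter `j ∈ [m]` acts on an `m`-invariant set by removing its `(j+1)`-st
smallest `m`-generator. -/
noncomputable def letterAct (m : ℤ) (j : ℕ) (Δ : Set ℤ) : Set ℤ :=
  Δ \ {nthSmallest j (gens m Δ)}

/-- `steps m p Δ i = p_{i-1} ⋯ p_1 p_0 ⋅ Δ`: the word acts one letter at a
time, the letter `p 0` (rightmost) acting first. -/
noncomputable def steps (m : ℤ) (p : ℕ → ℕ) (Δ : Set ℤ) : ℕ → Set ℤ
  | 0 => Δ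
  | i+1 => letterAct m (p i) (steps m p Δ i)

namespace Parking

lemma mem_shiftSet {Δ : Set ℤ} {k x : ℤ} : x ∈ shiftSet Δ k ↔ x - k ∈ Δ := by
  constructor
  · rintro ⟨y, hy, rfl⟩; simpa
  · intro h; exact ⟨x - k, h, by ring⟩

lemma invariant_iff {k : ℤ} {Δ : Set ℤ} : Invariant k Δ ↔ ∀ x ∈ Δ, x + k ∈ Δ := by
  constructor
  · intro h x hx; exact h ⟨x, hx, rfl⟩
  · rintro h y ⟨x, hx, rfl⟩; exact h x hx

lemma mem_gens {k : ℤ} {Δ : Set ℤ} {x : ℤ} : x ∈ gens k Δ ↔ x ∈ Δ ∧ x - k ∉ Δ := by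
  unfold gens; rw [Set.mem_diff, mem_shiftSet]

lemma invariant_nsmul {k : ℤ} {Δ : Set ℤ} (h : Invariant k Δ) {x : ℤ} (hx : x ∈ Δ) :
    ∀ t : ℕ, x + t * k ∈ Δ := by
  intro t; induction t with
  | zero => simpa
  | succ s ih =>
      have := (invariant_iff.1 h) _ ih
      have e : x + s * k + k = x + (s + 1 : ℕ) * k := by push_cast; ring
      rwa [e] at this

lemma hasMin_of {S : Set ℤ} (hne : S.Nonempty) (hbdd : BddBelow S) : HasMin S :=
  ⟨sInf S, Int.csInf_mem hne hbdd, fun _ hx => csInf_le hbdd hx⟩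

lemma bddBelow_of_hasMin {S : Set ℤ} (h : HasMin S) : BddBelow S := by
  obtain ⟨a, _, ha⟩ := h; exact ⟨a, fun x hx => ha x hx⟩

/-- rank characterization of nthSmallest -/
lemma nth_mem_rank {S : Set ℤ} (hS : S.Finite) :
    ∀ j, j < S.ncard → nthSmallest j S ∈ S ∧ (S ∩ Set.Iio (nthSmallest j S)).ncard = j := by
  intro j; induction j generalizing S with
  | zero =>
      intro hj
      have hne : S.Nonempty := Set.nonempty_of_ncard_ne_zero (by omega)
      have hbdd : BddBelow S := hS.bddBelow
      have hm : sInf S ∈ S := Int.csInf_mem hne hbdd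
      refine ⟨hm, ?_⟩
      have : S ∩ Set.Iio (sInf S) = ∅ := by
        ext x; simp only [Set.mem_inter_iff, Set.mem_Iio, Set.mem_empty_iff_false, iff_false]
        rintro ⟨hx, hlt⟩; exact absurd (csInf_le hbdd hx) (by omega)
      simp [nthSmallest, this]
  | succ j ih =>
      intro hj
      have hne : S.Nonempty := Set.nonempty_of_ncard_ne_zero (by omega)
      have hbdd : BddBelow S := hS.bddBelow
      set a := sInf S with ha
      have hma : a ∈ S := Int.csInf_mem hne hbdd
      set S' := S \ {a} with hS'
      have hS'fin : S'.Finite := hS.diff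
      have hcard' : S'.ncard = S.ncard - 1 := Set.ncard_diff_singleton_of_mem hma
      have hj' : j < S'.ncard := by omega
      obtain ⟨hb, hrk⟩ := ih hS'fin hj'
      set b := nthSmallest j S' with hbdef
      have hstep : nthSmallest (j+1) S = b := rfl
      have hbS : b ∈ S := hb.1
      have hab : a < b := lt_of_le_of_ne (csInf_le hbdd hbS) (fun h => hb.2 h.symm)
      refine ⟨by rw [hstep]; exact hbS, ?_⟩
      rw [hstep]
      have hset : S ∩ Set.Iio b = insert a (S' ∩ Set.Iio b) := by
        ext x
        simp only [Set.mem_inter_iff, Set.mem_Iio, Set.mem_insert_iff, hS', Set.mem_diff,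
          Set.mem_singleton_iff]
        constructor
        · rintro ⟨hx, hlt⟩
          by_cases hxa : x = a
          · exact Or.inl hxa
          · exact Or.inr ⟨⟨hx, hxa⟩, hlt⟩
        · rintro (rfl | ⟨⟨hx, _⟩, hlt⟩)
          · exact ⟨hma, hab⟩
          · exact ⟨hx, hlt⟩
      have hanotin : a ∉ S' ∩ Set.Iio b := by
        rintro ⟨⟨_, h⟩, _⟩; exact h rfl
      rw [hset, Set.ncard_insert_of_notMem hanotin ((hS'fin.inter_of_left _)), hrk]

lemma rank_inj {S : Set ℤ} (hS : S.Finite) {a b : ℤ} (ha : a ∈ S) (hb : b ∈ S)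
    (h : (S ∩ Set.Iio a).ncard = (S ∩ Set.Iio b).ncard) : a = b := by
  rcases lt_trichotomy a b with hlt | heq | hlt
  · exfalso
    have hss : S ∩ Set.Iio a ⊂ S ∩ Set.Iio b := by
      constructor
      · exact Set.inter_subset_inter_right _ (Set.Iio_subset_Iio hlt.le)
      · intro hsub
        exact absurd ((hsub ⟨ha, hlt⟩).2) (lt_irrefl a)
    exact absurd h (Nat.ne_of_lt (Set.ncard_lt_ncard hss (hS.inter_of_left _)))
  · exact heq
  · exfalso
    have hss : S ∩ Set.Iio b ⊂ S ∩ Set.Iio a := by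
      constructor
      · exact Set.inter_subset_inter_right _ (Set.Iio_subset_Iio hlt.le)
      · intro hsub
        exact absurd ((hsub ⟨hb, hlt⟩).2) (lt_irrefl b)
    exact absurd h.symm (Nat.ne_of_lt (Set.ncard_lt_ncard hss (hS.inter_of_left _)))

lemma rank_lt_card {S : Set ℤ} (hS : S.Finite) {a : ℤ} (ha : a ∈ S) :
    (S ∩ Set.Iio a).ncard < S.ncard := by
  apply Set.ncard_lt_ncard _ hS
  constructor
  · exact Set.inter_subset_left
  · intro hsub
    exact absurd (hsub ha).2 (lt_irrefl a)

lemma nth_of_rank {S : Set ℤ} (hS : S.Finite) {a : ℤ} {j : ℕ} (ha : a ∈ S)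
    (hr : (S ∩ Set.Iio a).ncard = j) : nthSmallest j S = a := by
  have hj : j < S.ncard := hr ▸ rank_lt_card hS ha
  obtain ⟨hmem, hrk⟩ := nth_mem_rank hS j hj
  exact rank_inj hS hmem ha (by rw [hrk, hr])



/-- each residue class mod k has a least element; gens k Δ has exactly k elements -/
lemma gens_count {k : ℕ} (hk : 0 < k) {Δ : Set ℤ} (hI : Invariant (k:ℤ) Δ)
    (hb : HasMin Δ) (hc : CoBounded Δ) :
    (gens (k:ℤ) Δ).Finite ∧ (gens (k:ℤ) Δ).ncard = k := by
  have hkZ : (0:ℤ) < (k:ℤ) := by exact_mod_cast hk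
  obtain ⟨N, hN⟩ := hc
  set C : ℕ → Set ℤ := fun r => {x | x ∈ Δ ∧ x % (k:ℤ) = r} with hC
  set μ : ℕ → ℤ := fun r => sInf (C r) with hμ
  have hCne : ∀ r : ℕ, r < k → (C r).Nonempty := by
    intro r hr
    refine ⟨(r:ℤ) + (k:ℤ) * (N.natAbs + 1), ?_, ?_⟩
    · apply hN
      have h1 : (N:ℤ) ≤ (N.natAbs : ℤ) := Int.le_natAbs
      have h2 : ((N.natAbs : ℤ) + 1) ≤ (k:ℤ) * (N.natAbs + 1) := by nlinarith
      have h3 : (0:ℤ) ≤ (r:ℤ) := Int.natCast_nonneg r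
      omega
    · show ((r:ℤ) + (k:ℤ) * ((N.natAbs:ℤ) + 1)) % (k:ℤ) = (r:ℤ)
      rw [Int.add_mul_emod_self_left]
      exact Int.emod_eq_of_lt (Int.natCast_nonneg r) (by exact_mod_cast hr)
  have hCbdd : ∀ r : ℕ, BddBelow (C r) := by
    intro r
    obtain ⟨a, _, ha⟩ := hb
    exact ⟨a, fun x hx => ha x hx.1⟩
  have hμmem : ∀ r : ℕ, r < k → μ r ∈ C r := fun r hr => Int.csInf_mem (hCne r hr) (hCbdd r)
  have hμle : ∀ r : ℕ, ∀ x ∈ C r, μ r ≤ x := fun r x hx => csInf_le (hCbdd r) hx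
  have himg : gens (k:ℤ) Δ = μ '' (Set.Iio k) := by
    ext x
    constructor
    · intro hx
      rw [mem_gens] at hx
      have hx0 : 0 ≤ x % (k:ℤ) := Int.emod_nonneg x (by omega)
      have hxk : x % (k:ℤ) < k := Int.emod_lt_of_pos x hkZ
      set r : ℕ := (x % (k:ℤ)).toNat with hrdef
      have hrk : r < k := by omega
      have hxC : x ∈ C r := ⟨hx.1, by simp [hrdef, Int.toNat_of_nonneg hx0]⟩
      refine ⟨r, hrk, ?_⟩
      have hle : μ r ≤ x := hμle r x hxC
      rcases eq_or_lt_of_le hle with heq | hlt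
      · exact heq
      · exfalso
        have hmod : x % (k:ℤ) = μ r % (k:ℤ) := by
          rw [hxC.2, (hμmem r hrk).2]
        have hdvd : (k:ℤ) ∣ (x - μ r) := Int.ModEq.dvd (show Int.ModEq (k:ℤ) (μ r) x from hmod.symm)
        obtain ⟨t, ht⟩ := hdvd
        have ht1 : 1 ≤ t := by nlinarith
        have hxk : x - (k:ℤ) = μ r + ((t-1).toNat : ℤ) * (k:ℤ) := by
          have h2 : ((t-1).toNat : ℤ) = t - 1 := Int.toNat_of_nonneg (by omega)
          rw [h2]; linear_combination ht
        exact hx.2 (by rw [hxk]; exact invariant_nsmul hI (hμmem r hrk).1 (t-1).toNat)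
    · rintro ⟨r, hr, rfl⟩
      rw [mem_gens]
      refine ⟨(hμmem r hr).1, ?_⟩
      intro hcon
      have : μ r - k ∈ C r := by
        refine ⟨hcon, ?_⟩
        have := (hμmem r hr).2
        show (μ r - (k:ℤ)) % (k:ℤ) = r
        rw [show μ r - (k:ℤ) = μ r + (k:ℤ)*(-1) by ring, Int.add_mul_emod_self_left]
        exact this
      have := hμle r _ this
      omega
  have hinj : Set.InjOn μ (Set.Iio k) := by
    intro r hr s hs heq
    have h1 : μ r % (k:ℤ) = r := (hμmem r hr).2
    have h2 : μ s % (k:ℤ) = s := (hμmem s hs).2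
    have : (r:ℤ) = (s:ℤ) := by rw [← h1, ← h2, heq]
    exact_mod_cast this
  have hfin : (Set.Iio k).Finite := Set.finite_Iio k
  constructor
  · rw [himg]; exact hfin.image μ
  · rw [himg, Set.ncard_image_of_injOn hinj, ← Finset.coe_range, Set.ncard_coe_finset,
      Finset.card_range]

lemma invariant_remove {k : ℤ} {Δ : Set ℤ} (hI : Invariant k Δ) {a : ℤ}
    (ha : a ∈ gens k Δ) : Invariant k (Δ \ {a}) := by
  rw [invariant_iff]
  rintro x ⟨hx, hxa⟩
  refine ⟨invariant_iff.1 hI x hx, ?_⟩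
  intro hcon
  rw [Set.mem_singleton_iff] at hcon
  rw [mem_gens] at ha
  exact ha.2 (by rw [← hcon]; simpa using hx)

lemma gens_remove {k : ℤ} (hk : 0 < k) {Δ : Set ℤ} (hI : Invariant k Δ) {a : ℤ}
    (ha : a ∈ gens k Δ) :
    gens k (Δ \ {a}) = insert (a + k) (gens k Δ \ {a}) := by
  rw [mem_gens] at ha
  have hak : a + k ∈ Δ := invariant_iff.1 hI a ha.1
  ext x
  simp only [mem_gens, Set.mem_diff, Set.mem_singleton_iff, Set.mem_insert_iff]
  constructor
  · rintro ⟨⟨hx, hxa⟩, hcon⟩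
    by_cases hxm : x - k = a
    · left; omega
    · right
      refine ⟨⟨hx, fun h => hcon ⟨h, hxm⟩⟩, hxa⟩
  · rintro (rfl | ⟨⟨hx, hgen⟩, hxa⟩)
    · refine ⟨⟨hak, by intro h; omega⟩, ?_⟩
      rintro ⟨_, h2⟩
      exact h2 (by ring)
    · exact ⟨⟨hx, hxa⟩, fun h => hgen h.1⟩

def NiceM (m : ℕ) (S : Set ℤ) : Prop := Invariant (m:ℤ) S ∧ HasMin S ∧ CoBounded S

lemma nice_remove {m : ℕ} (hm : 0 < m) {S : Set ℤ} (hN : NiceM m S) {a : ℤ}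
    (ha : a ∈ gens (m:ℤ) S) : NiceM m (S \ {a}) := by
  obtain ⟨hI, hb, ⟨N, hc⟩⟩ := hN
  refine ⟨invariant_remove hI ha, ?_, ?_⟩
  · apply hasMin_of
    · refine ⟨max N (a+1), ⟨hc _ (le_max_left _ _), ?_⟩⟩
      simp only [Set.mem_singleton_iff]
      have := le_max_right N (a+1); omega
    · obtain ⟨b, _, hble⟩ := hb
      exact ⟨b, fun x hx => hble x hx.1⟩
  · refine ⟨max N (a+1), fun x hx => ⟨hc x (le_trans (le_max_left _ _) hx), ?_⟩⟩
    simp only [Set.mem_singleton_iff]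
    have := le_max_right N (a+1); omega

lemma cobounded_nonempty {S : Set ℤ} (h : CoBounded S) : S.Nonempty := by
  obtain ⟨N, hN⟩ := h; exact ⟨N, hN N le_rfl⟩

end Parking

open Parking in
/-- Every bounded, co-bounded `(m,n)`-invariant set is shifted by `n` by a unique
monotone word `p = p_{n-1} ⋯ p_1 p_0 ∈ [m]^n` (with `p_0 ≤ p_1 ≤ … ≤ p_{n-1}`)
under the generator-removal action. -/
theorem exists_unique_monotone_parking (m n : ℕ) (hm : 0 < m) (hn : 0 < n) (Δ : Set ℤ)
    (hIm : Invariant m Δ) (hIn : Invariant n Δ) (hb : HasMin Δ) (hc : CoBounded Δ) :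
    ∃! p : Fin n → Fin m, Monotone p ∧
      steps m (fun i => if h : i < n then (p ⟨i, h⟩ : ℕ) else 0) Δ n = shiftSet Δ n := by
  have hmZ : (0:ℤ) < (m:ℤ) := by exact_mod_cast hm
  obtain ⟨hGfin, hGcard⟩ := gens_count hn hIn hb hc
  set G : Set ℤ := gens (n:ℤ) Δ with hGdef
  have hGsub : G ⊆ Δ := fun x hx => (mem_gens.1 hx).1
  have hFcard : hGfin.toFinset.card = n := by
    rw [← Set.ncard_eq_toFinset_card _ hGfin]; exact hGcard
  set e := hGfin.toFinset.orderIsoOfFin hFcard with he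
  set gg : ℕ → ℤ := fun k => if h : k < n then ((e ⟨k, h⟩ : ℤ)) else 0 with hgg
  have hggmem : ∀ k, k < n → gg k ∈ G := by
    intro k hk
    simp only [hgg, dif_pos hk]
    have := (e ⟨k, hk⟩).2
    rwa [Set.Finite.mem_toFinset] at this
  have hggsm : ∀ k l, k < l → l < n → gg k < gg l := by
    intro k l hkl hl
    have hk : k < n := lt_trans hkl hl
    simp only [hgg, dif_pos hk, dif_pos hl]
    exact_mod_cast e.strictMono (show (⟨k,hk⟩ : Fin n) < ⟨l,hl⟩ from hkl)
  have hgglt : ∀ k l, k < n → l < n → gg k < gg l → k < l := by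
    intro k l hk hl hlt
    by_contra hcon
    push_neg at hcon
    rcases lt_or_eq_of_le hcon with h | h
    · exact absurd (hggsm l k h hk) (lt_asymm hlt)
    · subst h; exact absurd hlt (lt_irrefl _)
  have hggsurj : ∀ x ∈ G, ∃ k, k < n ∧ gg k = x := by
    intro x hx
    obtain ⟨i, hi⟩ := e.surjective ⟨x, (Set.Finite.mem_toFinset hGfin).2 hx⟩
    refine ⟨i.val, i.isLt, ?_⟩
    simp only [hgg, dif_pos i.isLt, Fin.eta, hi]
  have hCG : ∀ y ∈ G, y - (m:ℤ) ∈ Δ → y - (m:ℤ) ∈ G := by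
    intro y hy hym
    rw [hGdef, mem_gens] at hy ⊢
    refine ⟨hym, fun hcon => hy.2 ?_⟩
    have := invariant_iff.1 hIm _ hcon
    have heq : y - (m:ℤ) - (n:ℤ) + (m:ℤ) = y - n := by ring
    rwa [heq] at this
  have hshift : shiftSet Δ (n:ℤ) = Δ \ G := by
    ext x
    rw [mem_shiftSet, Set.mem_diff, hGdef, mem_gens]
    constructor
    · intro h
      have hx : x ∈ Δ := by
        have := invariant_iff.1 hIn _ h; rwa [sub_add_cancel] at this
      exact ⟨hx, fun hcon => hcon.2 h⟩
    · rintro ⟨hx, hcon⟩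
      by_contra h
      exact hcon ⟨hx, h⟩
  set Dset : ℕ → Set ℤ := fun i => Δ \ (gg '' Set.Iio i) with hD
  have hFne : hGfin.toFinset.Nonempty := Finset.card_pos.1 (by omega)
  obtain ⟨N, hN⟩ := hc
  obtain ⟨A, hA, hAle⟩ := hb
  set B : ℤ := hGfin.toFinset.max' hFne with hBdef
  have hB : ∀ x ∈ G, x ≤ B := fun x hx =>
    Finset.le_max' _ _ ((Set.Finite.mem_toFinset hGfin).2 hx)
  have hDco : ∀ i, i ≤ n → CoBounded (Dset i) := by
    intro i hi
    refine ⟨max N (B+1), fun x hx => ⟨hN x (le_trans (le_max_left _ _) hx), ?_⟩⟩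
    rintro ⟨k, hk, hgk⟩
    have h1 := hB _ (hggmem k (lt_of_lt_of_le hk hi))
    rw [hgk] at h1
    have h2 := le_max_right N (B+1)
    omega
  have hDN : ∀ i, i ≤ n → NiceM m (Dset i) := by
    intro i hi
    refine ⟨?_, hasMin_of (cobounded_nonempty (hDco i hi)) ⟨A, fun x hx => hAle x hx.1⟩,
      hDco i hi⟩
    rw [invariant_iff]
    rintro x ⟨hx, hxim⟩
    refine ⟨invariant_iff.1 hIm x hx, ?_⟩
    rintro ⟨k, hk, hgk⟩
    have hk' : k < n := lt_of_lt_of_le hk hi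
    have hmem : gg k - (m:ℤ) ∈ G := hCG _ (hggmem k hk') (by rw [hgk]; simpa using hx)
    obtain ⟨l, hl, hgl⟩ := hggsurj _ hmem
    have hlt : gg l < gg k := by rw [hgl]; omega
    have hlk : l < k := hgglt l k hl hk' hlt
    exact hxim ⟨l, lt_trans hlk hk, by omega⟩
  have hDcard : ∀ i, i ≤ n →
      (gens (m:ℤ) (Dset i)).Finite ∧ (gens (m:ℤ) (Dset i)).ncard = m := by
    intro i hi
    obtain ⟨h1, h2, h3⟩ := hDN i hi
    exact gens_count hm h1 h2 h3
  have hgen : ∀ i, i < n → gg i ∈ gens (m:ℤ) (Dset i) := by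
    intro i hi
    rw [mem_gens]
    constructor
    · refine ⟨hGsub (hggmem i hi), ?_⟩
      rintro ⟨k, hk, hgk⟩
      exact absurd hgk (ne_of_lt (hggsm k i hk hi))
    · intro hcon
      obtain ⟨hmem, him⟩ := hcon
      have hmG : gg i - (m:ℤ) ∈ G := hCG _ (hggmem i hi) hmem
      obtain ⟨l, hl, hgl⟩ := hggsurj _ hmG
      have hlt : gg l < gg i := by rw [hgl]; omega
      exact him ⟨l, hgglt l i hl hi hlt, hgl⟩
  set pval : ℕ → ℕ := fun i => ((gens (m:ℤ) (Dset i)) ∩ Set.Iio (gg i)).ncard with hpv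
  have hplt : ∀ i, i < n → pval i < m := by
    intro i hi
    have := rank_lt_card (hDcard i hi.le).1 (hgen i hi)
    rwa [(hDcard i hi.le).2] at this
  set p : Fin n → Fin m := fun i => ⟨pval i.val, hplt i.val i.isLt⟩ with hp
  have hDstep : ∀ i, i < n → Dset (i+1) = Dset i \ {gg i} := by
    intro i hi
    ext x
    simp only [hD, Set.mem_diff, Set.mem_image, Set.mem_Iio, Set.mem_singleton_iff]
    constructor
    · rintro ⟨hx, him⟩
      refine ⟨⟨hx, fun ⟨k, hk, hgk⟩ => him ⟨k, by omega, hgk⟩⟩, fun hcon => him ⟨i, by omega, hcon.symm⟩⟩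
    · rintro ⟨⟨hx, him⟩, hne⟩
      refine ⟨hx, ?_⟩
      rintro ⟨k, hk, hgk⟩
      rcases Nat.lt_or_ge k i with h | h
      · exact him ⟨k, h, hgk⟩
      · have : k = i := by omega
        subst this
        exact hne hgk.symm
  have hnth : ∀ i, i < n → nthSmallest (pval i) (gens (m:ℤ) (Dset i)) = gg i := by
    intro i hi
    exact nth_of_rank (hDcard i hi.le).1 (hgen i hi) rfl
  have hsteps : ∀ i, i ≤ n →
      steps (m:ℕ) (fun i => if h : i < n then (p ⟨i, h⟩ : ℕ) else 0) Δ i = Dset i := by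
    intro i
    induction i with
    | zero =>
        intro _
        have h0 : Set.Iio (0:ℕ) = ∅ := by ext x; simp
        show Δ = Dset 0
        rw [hD]
        simp [h0]
    | succ i ih =>
        intro hi
        have hi' : i < n := hi
        simp only [steps]
        rw [ih hi'.le]
        simp only [dif_pos hi']
        show Dset i \ {nthSmallest (pval i) (gens (m:ℤ) (Dset i))} = Dset (i+1)
        rw [hnth i hi', hDstep i hi']
  have hfinal : Dset n = shiftSet Δ (n:ℤ) := by
    rw [hshift]
    have himg : gg '' Set.Iio n = G := by
      ext x
      constructor
      · rintro ⟨k, hk, rfl⟩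
        exact hggmem k hk
      · intro hx
        obtain ⟨k, hk, hgk⟩ := hggsurj x hx
        exact ⟨k, hk, hgk⟩
    rw [hD]
    simp only [himg]
  -- monotonicity
  have hadj : ∀ i, i + 1 < n → pval i ≤ pval (i+1) := by
    intro i hi
    have hswap : gens (m:ℤ) (Dset (i+1)) =
        insert (gg i + m) (gens (m:ℤ) (Dset i) \ {gg i}) := by
      rw [hDstep i (by omega)]
      exact gens_remove hmZ (hDN i (by omega)).1 (hgen i (by omega))
    have hsub : gens (m:ℤ) (Dset i) ∩ Set.Iio (gg i) ⊆
        gens (m:ℤ) (Dset (i+1)) ∩ Set.Iio (gg (i+1)) := by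
      rintro x ⟨hx, hlt⟩
      rw [Set.mem_Iio] at hlt
      refine ⟨?_, ?_⟩
      · rw [hswap]
        exact Set.mem_insert_of_mem _ ⟨hx, fun h => absurd h (ne_of_lt hlt)⟩
      · rw [Set.mem_Iio]
        exact lt_trans hlt (hggsm i (i+1) (by omega) hi)
    exact Set.ncard_le_ncard hsub ((hDcard (i+1) (by omega)).1.inter_of_left _)
  have hkey : ∀ d i, i + d < n → pval i ≤ pval (i + d) := by
    intro d
    induction d with
    | zero => intro i _; exact le_rfl
    | succ d ih =>
        intro i hi
        have h1 : i + d < n := by omega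
        calc pval i ≤ pval (i + d) := ih i h1
          _ ≤ pval (i + d + 1) := hadj (i+d) (by omega)
  have hmono : Monotone p := by
    intro a b hab
    show pval a.val ≤ pval b.val
    have h1 : a.val + (b.val - a.val) = b.val := by omega
    have := hkey (b.val - a.val) a.val (by omega)
    rwa [h1] at this
  refine ⟨p, ⟨hmono, by rw [hsteps n le_rfl]; exact hfinal⟩, ?_⟩
  rintro q ⟨hqmono, hqsteps⟩
  set qf : ℕ → ℕ := fun i => if h : i < n then (q ⟨i, h⟩ : ℕ) else 0 with hqf
  have hqlt : ∀ i, i < n → qf i < m := by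
    intro i hi; simp only [hqf, dif_pos hi]; exact (q ⟨i, hi⟩).isLt
  set E : ℕ → Set ℤ := steps (m:ℕ) qf Δ with hE
  set r : ℕ → ℤ := fun i => nthSmallest (qf i) (gens (m:ℤ) (E i)) with hr
  have hEstep : ∀ i, E (i+1) = E i \ {r i} := fun i => rfl
  have hmain : ∀ i, i ≤ n → NiceM m (E i) ∧ E i = Δ \ (r '' Set.Iio i) := by
    intro i
    induction i with
    | zero =>
        intro _
        refine ⟨⟨hIm, ⟨A, hA, hAle⟩, ⟨N, hN⟩⟩, ?_⟩
        have h0 : Set.Iio (0:ℕ) = ∅ := by ext x; simp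
        show Δ = Δ \ r '' Set.Iio 0
        simp [h0]
    | succ i ih =>
        intro hi
        obtain ⟨hNice, hEq⟩ := ih (by omega)
        have hcard := gens_count hm hNice.1 hNice.2.1 hNice.2.2
        have hri : r i ∈ gens (m:ℤ) (E i) :=
          (nth_mem_rank hcard.1 (qf i) (by rw [hcard.2]; exact hqlt i (by omega))).1
        constructor
        · rw [hEstep i]
          exact nice_remove hm hNice hri
        · rw [hEstep i, hEq]
          have himg : r '' Set.Iio (i+1) = insert (r i) (r '' Set.Iio i) := by
            ext x
            simp only [Set.mem_image, Set.mem_Iio, Set.mem_insert_iff]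
            constructor
            · rintro ⟨k, hk, rfl⟩
              rcases Nat.lt_or_ge k i with h | h
              · exact Or.inr ⟨k, h, rfl⟩
              · have : k = i := by omega
                subst this; exact Or.inl rfl
            · rintro (rfl | ⟨k, hk, rfl⟩)
              · exact ⟨i, by omega, rfl⟩
              · exact ⟨k, by omega, rfl⟩
          rw [himg]
          ext x
          simp only [Set.mem_diff, Set.mem_insert_iff, Set.mem_singleton_iff]
          tauto
  have hrgens : ∀ i, i < n → r i ∈ gens (m:ℤ) (E i) := by
    intro i hi
    obtain ⟨hNice, _⟩ := hmain i hi.le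
    have hcard := gens_count hm hNice.1 hNice.2.1 hNice.2.2
    exact (nth_mem_rank hcard.1 (qf i) (by rw [hcard.2]; exact hqlt i hi)).1
  have hrrank : ∀ i, i < n → (gens (m:ℤ) (E i) ∩ Set.Iio (r i)).ncard = qf i := by
    intro i hi
    obtain ⟨hNice, _⟩ := hmain i hi.le
    have hcard := gens_count hm hNice.1 hNice.2.1 hNice.2.2
    exact (nth_mem_rank hcard.1 (qf i) (by rw [hcard.2]; exact hqlt i hi)).2
  have hanti : ∀ i j, i ≤ j → E j ⊆ E i := by
    intro i j hij
    induction hij with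
    | refl => exact subset_rfl
    | @step j' h2 ih =>
        rw [hEstep j']
        exact Set.diff_subset.trans ih
  have hEn : E n = Δ \ G := by rw [← hshift]; exact hqsteps
  have hrG : ∀ i, i < n → r i ∈ G := by
    intro i hi
    have hmem : r i ∈ E i := (mem_gens.1 (hrgens i hi)).1
    have hΔ : r i ∈ Δ := hanti 0 i (Nat.zero_le i) hmem
    have hnot : r i ∉ E n := by
      intro hcon
      have h2 := hanti (i+1) n hi hcon
      rw [hEstep i] at h2
      exact h2.2 rfl
    rw [hEn] at hnot
    by_contra hcon
    exact hnot ⟨hΔ, hcon⟩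
  have hrne : ∀ i j, i < j → j < n → r i ≠ r j := by
    intro i j hij hj heq
    have hmemj : r j ∈ E j := (mem_gens.1 (hrgens j hj)).1
    have h2 := hanti (i+1) j hij hmemj
    rw [hEstep i] at h2
    exact h2.2 heq.symm
  have hrimg : r '' Set.Iio n = G := by
    apply Set.Subset.antisymm
    · rintro x ⟨k, hk, rfl⟩
      exact hrG k hk
    · intro x hx
      have hxΔ : x ∈ Δ := hGsub hx
      have hxn : x ∉ E n := by rw [hEn]; rintro ⟨_, h⟩; exact h hx
      rw [(hmain n le_rfl).2] at hxn
      by_contra hcon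
      exact hxn ⟨hxΔ, hcon⟩
  have hradj : ∀ i, i + 1 < n → r i < r (i+1) := by
    intro i hi
    by_contra hcon
    push_neg at hcon
    have hne := hrne i (i+1) (by omega) hi
    have hlt : r (i+1) < r i := lt_of_le_of_ne hcon (fun h => hne h.symm)
    have hNice := (hmain i (by omega)).1
    have hcard := gens_count hm hNice.1 hNice.2.1 hNice.2.2
    have hswap : gens (m:ℤ) (E (i+1)) =
        insert (r i + m) (gens (m:ℤ) (E i) \ {r i}) := by
      rw [hEstep i]
      exact gens_remove hmZ hNice.1 (hrgens i (by omega))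
    have hri1 : r (i+1) ∈ gens (m:ℤ) (E (i+1)) := hrgens (i+1) hi
    have hri1S : r (i+1) ∈ gens (m:ℤ) (E i) := by
      rw [hswap] at hri1
      rcases hri1 with h | h
      · exfalso; rw [h] at hlt; linarith [hmZ]
      · exact h.1
    have heq1 : gens (m:ℤ) (E (i+1)) ∩ Set.Iio (r (i+1)) =
        gens (m:ℤ) (E i) ∩ Set.Iio (r (i+1)) := by
      rw [hswap]
      ext x
      simp only [Set.mem_inter_iff, Set.mem_insert_iff, Set.mem_diff,
        Set.mem_singleton_iff, Set.mem_Iio]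
      constructor
      · rintro ⟨h | ⟨h1, _⟩, h2⟩
        · exfalso; rw [h] at h2; linarith [hmZ, hlt]
        · exact ⟨h1, h2⟩
      · rintro ⟨h1, h2⟩
        exact ⟨Or.inr ⟨h1, fun hx => by rw [hx] at h2; linarith [hlt]⟩, h2⟩
    have hlt2 : qf (i+1) < qf i := by
      rw [← hrrank (i+1) hi, ← hrrank i (by omega), heq1]
      apply Set.ncard_lt_ncard
      · constructor
        · exact Set.inter_subset_inter_right _ (Set.Iio_subset_Iio hlt.le)
        · intro hsub
          have := hsub ⟨hri1S, hlt⟩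
          simp only [Set.mem_inter_iff, Set.mem_Iio] at this
          exact absurd this.2 (lt_irrefl _)
      · exact hcard.1.inter_of_left _
    have hmq : (q ⟨i, by omega⟩ : ℕ) ≤ (q ⟨i+1, hi⟩ : ℕ) :=
      hqmono (show (⟨i, by omega⟩ : Fin n) ≤ ⟨i+1, hi⟩ from by
        rw [Fin.mk_le_mk]; omega)
    simp only [hqf, dif_pos (show i < n by omega), dif_pos hi] at hlt2
    omega
  have hrsm : ∀ d i, i + d + 1 < n → r i < r (i + d + 1) := by
    intro d
    induction d with
    | zero => intro i hi; exact hradj i (by omega)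
    | succ d ih =>
        intro i hi
        have h1 : r i < r (i + d + 1) := ih i (by omega)
        have h2 : r (i + d + 1) < r (i + d + 1 + 1) := hradj (i+d+1) (by omega)
        have h3 : i + (d+1) + 1 = i + d + 1 + 1 := by omega
        rw [h3]; exact lt_trans h1 h2
  have hrlt : ∀ i j, i < j → j < n → r i < r j := by
    intro i j hij hj
    have h1 : i + (j - i - 1) + 1 = j := by omega
    have := hrsm (j - i - 1) i (by omega)
    rwa [h1] at this
  have hrltiff : ∀ i j, i < n → j < n → r i < r j → i < j := by
    intro i j hi hj hlt
    by_contra hcon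
    push_neg at hcon
    rcases lt_or_eq_of_le hcon with h | h
    · exact absurd (hrlt j i h hi) (lt_asymm hlt)
    · subst h; exact absurd hlt (lt_irrefl _)
  have hrrankG : ∀ i, i < n → (G ∩ Set.Iio (r i)).ncard = i := by
    intro i hi
    have himg2 : G ∩ Set.Iio (r i) = r '' Set.Iio i := by
      ext x
      constructor
      · rintro ⟨hxG, hxlt⟩
        rw [← hrimg] at hxG
        obtain ⟨k, hk, rfl⟩ := hxG
        rw [Set.mem_Iio] at hk
        rw [Set.mem_Iio] at hxlt
        exact ⟨k, Set.mem_Iio.2 (hrltiff k i hk hi hxlt), rfl⟩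
      · rintro ⟨k, hk, rfl⟩
        rw [Set.mem_Iio] at hk
        exact ⟨hrG k (by omega), Set.mem_Iio.2 (hrlt k i hk hi)⟩
    have hinj : Set.InjOn r (Set.Iio i) := by
      intro a ha b hb heq
      simp only [Set.mem_Iio] at ha hb
      by_contra hne
      rcases Nat.lt_or_ge a b with h | h
      · exact absurd heq (ne_of_lt (hrlt a b h (by omega)))
      · have h' : b < a := by omega
        exact absurd heq.symm (ne_of_lt (hrlt b a h' (by omega)))
    rw [himg2, Set.ncard_image_of_injOn hinj, ← Finset.coe_range,
      Set.ncard_coe_finset, Finset.card_range]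
  have hggrankG : ∀ i, i < n → (G ∩ Set.Iio (gg i)).ncard = i := by
    intro i hi
    have himg2 : G ∩ Set.Iio (gg i) = gg '' Set.Iio i := by
      ext x
      constructor
      · rintro ⟨hxG, hxlt⟩
        rw [Set.mem_Iio] at hxlt
        obtain ⟨k, hk, rfl⟩ := hggsurj x hxG
        exact ⟨k, Set.mem_Iio.2 (hgglt k i hk hi hxlt), rfl⟩
      · rintro ⟨k, hk, rfl⟩
        rw [Set.mem_Iio] at hk
        exact ⟨hggmem k (by omega), Set.mem_Iio.2 (hggsm k i hk hi)⟩
    have hinj : Set.InjOn gg (Set.Iio i) := by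
      intro a ha b hb heq
      simp only [Set.mem_Iio] at ha hb
      by_contra hne
      rcases Nat.lt_or_ge a b with h | h
      · exact absurd heq (ne_of_lt (hggsm a b h (by omega)))
      · have h' : b < a := by omega
        exact absurd heq.symm (ne_of_lt (hggsm b a h' (by omega)))
    rw [himg2, Set.ncard_image_of_injOn hinj, ← Finset.coe_range,
      Set.ncard_coe_finset, Finset.card_range]
  have hrg : ∀ i, i < n → r i = gg i := by
    intro i hi
    exact rank_inj hGfin (hrG i hi) (hggmem i hi)
      (by rw [hrrankG i hi, hggrankG i hi])
  have hED : ∀ i, i ≤ n → E i = Dset i := by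
    intro i hi
    rw [(hmain i hi).2]
    show Δ \ r '' Set.Iio i = Δ \ gg '' Set.Iio i
    congr 1
    ext x
    simp only [Set.mem_image, Set.mem_Iio]
    constructor
    · rintro ⟨k, hk, rfl⟩
      exact ⟨k, hk, (hrg k (by omega)).symm⟩
    · rintro ⟨k, hk, rfl⟩
      exact ⟨k, hk, hrg k (by omega)⟩
  funext i
  apply Fin.ext
  have hi := i.isLt
  have h1 : qf i.val = (q i : ℕ) := by simp only [hqf, dif_pos hi, Fin.eta]
  have h3 : qf i.val = pval i.val := by
    rw [← hrrank i.val hi, hED i.val hi.le, hrg i.val hi]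
  show (q i : ℕ) = (p i : ℕ)
  rw [← h1, h3]
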